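/- arXiv:1503.04380 — 3 statements merged into one kernel-verified Lean document; each statement's English description precedes it below -/
import Mathlib

section
/- Let T={T_1,...,T_r} be a regular triangular set in K[x_1,...,x_n] with parameter set u, where y_i denotes the leading variable of T_i, and let P ∈ K[u,y_1,...,y_r]. If P is not identically zero on any irreducible component of Zero(sat(T)), then the ideal (P, T_1,...,T_r) has nonzero intersection with K[u]. -/
open MvPolynomial

namespace Tri

/-- The initial of `f` with respect to the variable `i`: the leading coefficient of `f`
viewed as a univariate polynomial in `x_i`, expressed as a polynomial in the remaining
variables (an element of the same ring). -/
noncomputable def initial {K : Type*} [CommSemiring K] {σ : Type*} [DecidableEq σ]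
    (f : MvPolynomial σ K) (i : σ) : MvPolynomial σ K :=
  ∑ m ∈ f.support.filter (fun m => m i = MvPolynomial.degreeOf i f),
    MvPolynomial.monomial (Finsupp.erase i m) (MvPolynomial.coeff m f)

/-- `x_i` is the leading variable of `f`: it occurs in `f` and is the greatest variable
occurring in `f`. -/
def IsLeadingVar {K : Type*} [CommSemiring K] {n : ℕ} (f : MvPolynomial (Fin n) K)
    (i : Fin n) : Prop :=
  0 < MvPolynomial.degreeOf i f ∧ ∀ j, 0 < MvPolynomial.degreeOf j f → j ≤ i

/-- `T` (with leading variables `lvs`) is a triangular set: the polynomials of `T` are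
nonconstant with pairwise distinct, increasing leading variables. -/
def IsTriangular {K : Type*} [CommSemiring K] {n r : ℕ} (T : Fin r → MvPolynomial (Fin n) K)
    (lvs : Fin r → Fin n) : Prop :=
  StrictMono lvs ∧ ∀ j, IsLeadingVar (T j) (lvs j)

/-- `p` lies in `K[u]` where `u` is the parameter set of a triangular set with leading
variables `lvs`, i.e. no variable of `p` is a leading variable. -/
def inParams {K : Type*} [CommSemiring K] {n r : ℕ} (lvs : Fin r → Fin n)
    (p : MvPolynomial (Fin n) K) : Prop :=
  ∀ i ∈ p.vars, i ∉ Set.range lvs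

/-- `T` is a regular triangular set: it is triangular, and for each `i` the ideal
`(T_1, …, T_{i-1}, ini(T_i))` has nonzero intersection with `K[u]`. -/
def IsRegular {K : Type*} [CommRing K] {n r : ℕ} (T : Fin r → MvPolynomial (Fin n) K)
    (lvs : Fin r → Fin n) : Prop :=
  IsTriangular T lvs ∧
    ∀ i : Fin r, ∃ p ∈ Ideal.span (T '' {j | j < i} ∪ {initial (T i) (lvs i)}),
      p ≠ 0 ∧ inParams lvs p

/-- The product of the initials of a triangular set. -/
noncomputable def initProd {K : Type*} [CommSemiring K] {n r : ℕ}
    (T : Fin r → MvPolynomial (Fin n) K) (lvs : Fin r → Fin n) : MvPolynomial (Fin n) K :=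
  ∏ j, initial (T j) (lvs j)

/-- The saturation `{f | ∃ d, a ^ d * f ∈ J}` of an ideal `J` by an element `a`. -/
def saturationBy {R : Type*} [CommRing R] (J : Ideal R) (a : R) : Ideal R where
  carrier := {f | ∃ d : ℕ, a ^ d * f ∈ J}
  zero_mem' := ⟨0, by simpa using J.zero_mem⟩
  add_mem' := by
    rintro f g ⟨d1, h1⟩ ⟨d2, h2⟩
    refine ⟨d1 + d2, ?_⟩
    have h : a ^ (d1 + d2) * (f + g)
        = a ^ d2 * (a ^ d1 * f) + a ^ d1 * (a ^ d2 * g) := by ring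
    rw [h]
    exact J.add_mem (J.mul_mem_left _ h1) (J.mul_mem_left _ h2)
  smul_mem' := by
    rintro c f ⟨d, h⟩
    exact ⟨d, by rw [smul_eq_mul, mul_left_comm]; exact J.mul_mem_left c h⟩

/-- The saturation ideal `sat(T) = {f | ∃ d, I_T ^ d * f ∈ (T)}` of a triangular set. -/
noncomputable def satIdeal {K : Type*} [CommRing K] {n r : ℕ}
    (T : Fin r → MvPolynomial (Fin n) K) (lvs : Fin r → Fin n) :
    Ideal (MvPolynomial (Fin n) K) :=
  saturationBy (Ideal.span (Set.range T)) (initProd T lvs)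

/-- The zero set `Zero(S/D)` in `E^n` of a system `S` of polynomials together with an
inequation `D ≠ 0`. -/
def zeroSet {K : Type*} [CommSemiring K] {n : ℕ} (E : Type*) [CommSemiring E] [Algebra K E]
    (S : Set (MvPolynomial (Fin n) K)) (D : MvPolynomial (Fin n) K) : Set (Fin n → E) :=
  {x | (∀ f ∈ S, MvPolynomial.aeval x f = 0) ∧ MvPolynomial.aeval x D ≠ 0}

/-- The zero set `Zero(S)` in `E^n` of a system `S` of polynomials. -/
def zeroSet0 {K : Type*} [CommSemiring K] {n : ℕ} (E : Type*) [CommSemiring E] [Algebra K E]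
    (S : Set (MvPolynomial (Fin n) K)) : Set (Fin n → E) :=
  {x | ∀ f ∈ S, MvPolynomial.aeval x f = 0}

/-- The zero set `Zero(I)` in `E^n` of an ideal `I`. -/
def zeroSetI {K : Type*} [CommSemiring K] {n : ℕ} (E : Type*) [CommSemiring E] [Algebra K E]
    (I : Ideal (MvPolynomial (Fin n) K)) : Set (Fin n → E) :=
  {x | ∀ f ∈ I, MvPolynomial.aeval x f = 0}

/-- The Zariski closure in `E^n` of a set `S` (with respect to polynomials over `K`):
the zero set of all polynomials vanishing identically on `S`. -/
def zClosure (K : Type*) [CommSemiring K] {n : ℕ} {E : Type*} [CommSemiring E] [Algebra K E]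
    (S : Set (Fin n → E)) : Set (Fin n → E) :=
  {x | ∀ f : MvPolynomial (Fin n) K, (∀ y ∈ S, MvPolynomial.aeval y f = 0) →
    MvPolynomial.aeval x f = 0}

/-- `P` is not identically zero on any irreducible component of `Zero(I)`; algebraically,
`P` lies in no minimal prime of `I`. -/
def NotIdZeroOnComponents {R : Type*} [CommRing R] (I : Ideal R) (P : R) : Prop :=
  ∀ p ∈ I.minimalPrimes, P ∉ p

/-- An ideal is unmixed if all of its associated primes have the same dimension. -/
def IsUnmixed {R : Type*} [CommRing R] (I : Ideal R) : Prop :=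
  ∀ p ∈ associatedPrimes R (R ⧸ I), ∀ q ∈ associatedPrimes R (R ⧸ I),
    ringKrullDim (R ⧸ p) = ringKrullDim (R ⧸ q)

end Tri

section Aux

open MvPolynomial Tri

variable {K : Type*} [Field K] {n r : ℕ}

private lemma Tri.mem_vars_iff_degreeOf_pos {σ : Type*} (f : MvPolynomial σ K) (i : σ) :
    i ∈ f.vars ↔ 0 < f.degreeOf i := by
  rw [MvPolynomial.degreeOf_eq_sup, MvPolynomial.mem_vars]
  constructor
  · rintro ⟨d, hd, hid⟩
    exact Finset.lt_sup_iff.mpr ⟨d, hd, Nat.pos_of_ne_zero (Finsupp.mem_support_iff.mp hid)⟩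
  · intro h
    obtain ⟨d, hd, hdi⟩ := Finset.lt_sup_iff.mp h
    exact ⟨d, hd, Finsupp.mem_support_iff.mpr hdi.ne'⟩

private lemma Tri.aeval_mem_subring {L : Type*} [CommRing L] [Algebra K L]
    (S : Subring L) (x : Fin n → L) (g : MvPolynomial (Fin n) K)
    (hC : ∀ k : K, algebraMap K L k ∈ S) (hX : ∀ j ∈ g.vars, x j ∈ S) :
    MvPolynomial.aeval x g ∈ S := by
  have hrw : MvPolynomial.aeval x g =
      ∑ m ∈ g.support, algebraMap K L (MvPolynomial.coeff m g) *
        ∏ j ∈ m.support, x j ^ m j := by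
    conv_lhs => rw [g.as_sum]
    rw [map_sum]
    refine Finset.sum_congr rfl fun m hm => ?_
    rw [MvPolynomial.aeval_monomial]
    rfl
  rw [hrw]
  refine Subring.sum_mem _ fun m hm => Subring.mul_mem _ (hC _) (Subring.prod_mem _ ?_)
  intro j hj
  exact Subring.pow_mem _ (hX j ((MvPolynomial.mem_vars j).mpr ⟨m, hm, hj⟩)) _

private lemma Tri.isIntegral_of_mem_IF {L : Type*} [Field L] [Algebra K L]
    (F : IntermediateField K L) {y : L} (hy : y ∈ F) : IsIntegral (↥F) y := by
  have h : y = algebraMap (↥F) L ⟨y, hy⟩ := rfl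
  rw [h]
  exact isIntegral_algebraMap

private lemma Tri.isIntegral_of_poly_relation {F L : Type*} [Field F] [Field L] [Algebra F L]
    (x : L) (d : ℕ) (c : ℕ → L) (hc : ∀ k, k ≤ d → IsIntegral F (c k))
    (hlead : c d ≠ 0) (hrel : ∑ k ∈ Finset.range (d + 1), c k * x ^ k = 0) :
    IsIntegral F x := by
  set F' := IntermediateField.adjoin F (Set.range fun k : Fin (d + 1) => c k.1) with hF'
  have hfin : FiniteDimensional F (↥F') := by
    refine IntermediateField.finiteDimensional_adjoin fun y hy => ?_
    obtain ⟨k, rfl⟩ := hy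
    exact hc k.1 (Nat.lt_succ_iff.mp k.isLt)
  have hmem : ∀ k : ℕ, k ≤ d → c k ∈ F' := fun k hk =>
    IntermediateField.subset_adjoin _ _ ⟨⟨k, Nat.lt_succ_of_le hk⟩, rfl⟩
  set cF : ℕ → ↥F' := fun k => if h : k ≤ d then (⟨c k, hmem k h⟩ : ↥F') else 0 with hcF
  set Q : Polynomial (↥F') := ∑ k ∈ Finset.range (d + 1), Polynomial.C (cF k) * Polynomial.X ^ k
    with hQ
  have hcoeff : Q.coeff d = cF d := by
    rw [hQ, Polynomial.finset_sum_coeff]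
    simp only [Polynomial.coeff_C_mul, Polynomial.coeff_X_pow]
    rw [Finset.sum_congr rfl (fun k _ => by rw [mul_ite, mul_one, mul_zero]),
      Finset.sum_ite_eq (Finset.range (d + 1)) d cF]
    simp
  have hQ0 : Q ≠ 0 := by
    intro h
    rw [h, Polynomial.coeff_zero] at hcoeff
    apply hlead
    have : cF d = (⟨c d, hmem d le_rfl⟩ : ↥F') := by simp [hcF]
    rw [this] at hcoeff
    exact congrArg Subtype.val hcoeff.symm
  have haev : Polynomial.aeval x Q = 0 := by
    rw [hQ, map_sum]
    rw [show (0 : L) = ∑ k ∈ Finset.range (d + 1), c k * x ^ k from hrel.symm]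
    refine Finset.sum_congr rfl fun k hk => ?_
    rw [map_mul, map_pow, Polynomial.aeval_X, Polynomial.aeval_C]
    congr 1
    have hk' : k ≤ d := Nat.lt_succ_iff.mp (Finset.mem_range.mp hk)
    simp [hcF, hk']
  have halg : IsAlgebraic (↥F') x := ⟨Q, hQ0, haev⟩
  have hint : IsIntegral (↥F') x := halg.isIntegral
  haveI : Algebra.IsIntegral F (↥F') := Algebra.IsIntegral.of_finite F (↥F')
  exact isIntegral_trans x hint

end Aux

section Aux2

open MvPolynomial Tri

variable {K : Type*} [Field K] {n r : ℕ}

/-- The coefficient of `x_v ^ k` in `f`, viewed as polynomial in the other variables. -/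
private noncomputable def Tri.coeffAt {σ : Type*} [DecidableEq σ]
    (f : MvPolynomial σ K) (v : σ) (k : ℕ) : MvPolynomial σ K :=
  ∑ m ∈ f.support.filter (fun m => m v = k),
    MvPolynomial.monomial (Finsupp.erase v m) (MvPolynomial.coeff m f)

private lemma Tri.coeffAt_degreeOf {σ : Type*} [DecidableEq σ]
    (f : MvPolynomial σ K) (v : σ) :
    Tri.coeffAt f v (f.degreeOf v) = Tri.initial f v := rfl

private lemma Tri.vars_coeffAt {σ : Type*} [DecidableEq σ]
    (f : MvPolynomial σ K) (v : σ) (k : ℕ) {j : σ}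
    (hj : j ∈ (Tri.coeffAt f v k).vars) : j ∈ f.vars ∧ j ≠ v := by
  have h := MvPolynomial.vars_sum_subset _ _ hj
  obtain ⟨m, hm, hjm⟩ := Finset.mem_biUnion.mp h
  obtain ⟨hm', _⟩ := Finset.mem_filter.mp hm
  have hc : MvPolynomial.coeff m f ≠ 0 := MvPolynomial.mem_support_iff.mp hm'
  rw [MvPolynomial.vars_monomial hc, Finsupp.support_erase] at hjm
  have hjv := Finset.mem_erase.mp hjm
  exact ⟨(MvPolynomial.mem_vars j).mpr ⟨m, hm', hjv.2⟩, hjv.1⟩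

private lemma Tri.aeval_eq_sum_coeffAt {L : Type*} [CommRing L] [Algebra K L]
    (f : MvPolynomial (Fin n) K) (v : Fin n) (x : Fin n → L) :
    MvPolynomial.aeval x f = ∑ k ∈ Finset.range (f.degreeOf v + 1),
      MvPolynomial.aeval x (Tri.coeffAt f v k) * x v ^ k := by
  conv_lhs => rw [f.as_sum]
  rw [map_sum, ← Finset.sum_fiberwise_of_maps_to
    (g := fun m : Fin n →₀ ℕ => m v) (t := Finset.range (f.degreeOf v + 1))
    (fun m hm => Finset.mem_range.mpr (Nat.lt_succ_of_le
      (MvPolynomial.monomial_le_degreeOf v hm))) _]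
  refine Finset.sum_congr rfl fun k hk => ?_
  rw [Tri.coeffAt, map_sum, Finset.sum_mul]
  refine Finset.sum_congr rfl fun m hm => ?_
  obtain ⟨hm', hmv⟩ := Finset.mem_filter.mp hm
  subst hmv
  rw [MvPolynomial.aeval_monomial, MvPolynomial.aeval_monomial, mul_assoc]
  congr 1
  have hsplit : (Finsupp.erase v m) + Finsupp.single v (m v) = m := Finsupp.erase_add_single v m
  conv_lhs => rw [← hsplit]
  rw [Finsupp.prod_add_index' (fun j => pow_zero (x j)) (fun j e1 e2 => pow_add (x j) e1 e2)]
  congr 1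
  exact Finsupp.prod_single_index (pow_zero (x v))

/-- Regularity gives a nonzero parameter polynomial `c` with `c ≡ a * I_T` mod `(T)`. -/
private lemma Tri.regular_combination (T : Fin r → MvPolynomial (Fin n) K)
    (lvs : Fin r → Fin n) (hT : IsRegular T lvs) :
    ∃ c a : MvPolynomial (Fin n) K, c ≠ 0 ∧ inParams lvs c ∧
      c - a * initProd T lvs ∈ Ideal.span (Set.range T) := by
  choose p hp hp0 hpu using hT.2
  have key : ∀ i, ∃ a t, t ∈ Ideal.span (Set.range T) ∧
      p i = t + a * initial (T i) (lvs i) := by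
    intro i
    have hmem := hp i
    rw [Ideal.span_union] at hmem
    obtain ⟨t, ht, z, hz, hsum⟩ := Submodule.mem_sup.mp hmem
    obtain ⟨a, rfl⟩ := Ideal.mem_span_singleton'.mp hz
    exact ⟨a, t, Ideal.span_mono (Set.image_subset_range T _) ht, hsum.symm⟩
  choose a t hts hpi using key
  refine ⟨∏ i, p i, ∏ i, a i, ?_, ?_, ?_⟩
  · exact Finset.prod_ne_zero_iff.mpr fun i _ => hp0 i
  · intro j hj
    obtain ⟨i, _, hji⟩ := Finset.mem_biUnion.mp (MvPolynomial.vars_prod (fun i => p i) hj)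
    exact hpu i j hji
  · have hmk : ∀ i, Ideal.Quotient.mk (Ideal.span (Set.range T)) (p i) =
        Ideal.Quotient.mk _ (a i * initial (T i) (lvs i)) := by
      intro i
      rw [Ideal.Quotient.eq, hpi i, add_sub_cancel_right]
      exact hts i
    rw [← Ideal.Quotient.eq, map_prod, map_mul, map_prod,
      show Ideal.Quotient.mk (Ideal.span (Set.range T)) (initProd T lvs) =
        Ideal.Quotient.mk _ (∏ i, initial (T i) (lvs i)) from rfl,
      map_prod, ← Finset.prod_mul_distrib]
    exact Finset.prod_congr rfl fun i _ => hmk i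

private lemma Tri.span_le_sat (T : Fin r → MvPolynomial (Fin n) K) (lvs : Fin r → Fin n) :
    Ideal.span (Set.range T) ≤ satIdeal T lvs := by
  intro f hf
  exact ⟨0, by simpa using hf⟩

private lemma Tri.sat_absorb (T : Fin r → MvPolynomial (Fin n) K) (lvs : Fin r → Fin n)
    {f : MvPolynomial (Fin n) K} (k : ℕ)
    (h : initProd T lvs ^ k * f ∈ satIdeal T lvs) : f ∈ satIdeal T lvs := by
  obtain ⟨d, hd⟩ := h
  exact ⟨d + k, by rwa [pow_add, mul_assoc]⟩

private lemma Tri.initProd_not_mem (T : Fin r → MvPolynomial (Fin n) K) (lvs : Fin r → Fin n)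
    {𝔭 : Ideal (MvPolynomial (Fin n) K)} (h𝔭 : 𝔭 ∈ (satIdeal T lvs).minimalPrimes) :
    initProd T lvs ∉ 𝔭 := by
  intro hIT
  haveI hp : 𝔭.IsPrime := h𝔭.1.1
  set a := initProd T lvs
  set S : Submonoid (MvPolynomial (Fin n) K) :=
    { carrier := {y | ∃ x, x ∉ 𝔭 ∧ ∃ k : ℕ, y = x * a ^ k}
      one_mem' := ⟨1, fun h => hp.ne_top (Ideal.eq_top_of_isUnit_mem _ h isUnit_one), 0, by simp⟩
      mul_mem' := by
        rintro y z ⟨x1, hx1, k1, rfl⟩ ⟨x2, hx2, k2, rfl⟩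
        refine ⟨x1 * x2, fun h => ?_, k1 + k2, by ring⟩
        rcases hp.mem_or_mem h with h | h
        · exact hx1 h
        · exact hx2 h } with hS
  have hdisj : Disjoint ((satIdeal T lvs : Ideal _) : Set (MvPolynomial (Fin n) K)) (S : Set _) := by
    rw [Set.disjoint_left]
    rintro y hy ⟨x, hx, k, rfl⟩
    apply hx
    apply h𝔭.1.2
    apply Tri.sat_absorb T lvs k
    rwa [mul_comm]
  obtain ⟨q, hq, hJq, hqS⟩ := Ideal.exists_le_prime_disjoint _ S hdisj
  have hq𝔭 : q ≤ 𝔭 := by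
    intro y hy
    by_contra hy𝔭
    exact Set.disjoint_left.mp hqS hy ⟨y, hy𝔭, 0, by simp⟩
  have h𝔭q : 𝔭 ≤ q := h𝔭.2 ⟨hq, hJq⟩ hq𝔭
  exact Set.disjoint_left.mp hqS (h𝔭q hIT) ⟨1, fun h => hp.ne_top
    (Ideal.eq_top_of_isUnit_mem _ h isUnit_one), 1, by ring⟩

end Aux2

section Aux3

open MvPolynomial Tri

variable {K : Type*} [Field K] {n r : ℕ}

set_option maxHeartbeats 2000000 in
set_option synthInstance.maxHeartbeats 1000000 in
private lemma Tri.per_prime (T : Fin r → MvPolynomial (Fin n) K) (lvs : Fin r → Fin n)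
    (hT : IsRegular T lvs) (P : MvPolynomial (Fin n) K)
    {𝔭 : Ideal (MvPolynomial (Fin n) K)} (h𝔭 : 𝔭 ∈ (satIdeal T lvs).minimalPrimes)
    (hP𝔭 : P ∉ 𝔭) :
    ∃ c : MvPolynomial (Fin n) K, c ≠ 0 ∧ inParams lvs c ∧
      ∃ q ∈ 𝔭, ∃ h, c = q + P * h := by
  classical
  haveI hprime : 𝔭.IsPrime := h𝔭.1.1
  set Rq := MvPolynomial (Fin n) K ⧸ 𝔭 with hRq
  haveI : IsDomain Rq := Ideal.Quotient.isDomain 𝔭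
  set L := FractionRing Rq with hL
  letI : Algebra K L := ((algebraMap Rq L).comp (algebraMap K Rq)).toAlgebra
  set xb : Fin n → L := fun j => algebraMap Rq L (Ideal.Quotient.mk 𝔭 (MvPolynomial.X j))
    with hxb
  have hcomp : ∀ g : MvPolynomial (Fin n) K,
      MvPolynomial.aeval xb g = algebraMap Rq L (Ideal.Quotient.mk 𝔭 g) := by
    have hhom : ((MvPolynomial.aeval xb : MvPolynomial (Fin n) K →ₐ[K] L) :
        MvPolynomial (Fin n) K →+* L)
        = (algebraMap Rq L).comp (Ideal.Quotient.mk 𝔭) := by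
      apply MvPolynomial.ringHom_ext
      · intro a
        have h1 : (Ideal.Quotient.mk 𝔭) (MvPolynomial.C a) = algebraMap K Rq a := by
          rw [← MvPolynomial.algebraMap_eq, Ideal.Quotient.mk_algebraMap]
        simp only [RingHom.coe_comp, Function.comp_apply, h1]
        show MvPolynomial.aeval xb (MvPolynomial.C a) = (algebraMap Rq L) ((algebraMap K Rq) a)
        rw [MvPolynomial.aeval_C]
        rfl
      · intro j
        simp only [RingHom.coe_comp, Function.comp_apply]
        show MvPolynomial.aeval xb (MvPolynomial.X j) = _
        rw [MvPolynomial.aeval_X]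
    intro g
    exact RingHom.congr_fun hhom g
  have hker : ∀ g : MvPolynomial (Fin n) K, MvPolynomial.aeval xb g = 0 ↔ g ∈ 𝔭 := by
    intro g
    rw [hcomp g]
    constructor
    · intro h
      refine Ideal.Quotient.eq_zero_iff_mem.mp (IsFractionRing.injective Rq L ?_)
      rw [h, map_zero]
    · intro h
      rw [Ideal.Quotient.eq_zero_iff_mem.mpr h, map_zero]
  have hinim : ∀ i : Fin r, initial (T i) (lvs i) ∉ 𝔭 := by
    intro i hmem
    apply Tri.initProd_not_mem T lvs h𝔭
    rw [show initProd T lvs = ∏ j, initial (T j) (lvs j) from rfl,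
      ← Finset.mul_prod_erase Finset.univ _ (Finset.mem_univ i)]
    exact Ideal.mul_mem_right _ _ hmem
  -- parameters and the base field
  set W := {j : Fin n // j ∉ Set.range lvs} with hW
  set w : W → L := fun u => xb u.1 with hw
  set F := IntermediateField.adjoin K (Set.range w) with hF
  have hSmem : ∀ y : L, y ∈ (integralClosure (↥F) L).toSubring ↔ IsIntegral (↥F) y :=
    fun y => Iff.rfl
  have hCint : ∀ k : K, algebraMap K L k ∈ (integralClosure (↥F) L).toSubring :=
    fun k => (hSmem _).mpr (Tri.isIntegral_of_mem_IF F (F.algebraMap_mem k))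
  -- all variables are integral over F
  have hint : ∀ j : Fin n, IsIntegral (↥F) (xb j) := by
    have main : ∀ N : ℕ, ∀ j : Fin n, (j : ℕ) < N → IsIntegral (↥F) (xb j) := by
      intro N
      induction N with
      | zero => exact fun j hj => absurd hj (Nat.not_lt_zero _)
      | succ N ih =>
        intro j hj
        by_cases hjr : j ∈ Set.range lvs
        · obtain ⟨i, rfl⟩ := hjr
          have hlv := hT.1.2 i
          have hrel0 : MvPolynomial.aeval xb (T i) = 0 :=
            (hker (T i)).mpr (h𝔭.1.2 (Tri.span_le_sat T lvs
              (Ideal.subset_span ⟨i, rfl⟩)))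
          rw [Tri.aeval_eq_sum_coeffAt (T i) (lvs i) xb] at hrel0
          refine Tri.isIntegral_of_poly_relation (xb (lvs i)) ((T i).degreeOf (lvs i))
            (fun k => MvPolynomial.aeval xb (Tri.coeffAt (T i) (lvs i) k)) ?_ ?_ hrel0
          · intro k _
            refine (hSmem _).mp (Tri.aeval_mem_subring _ xb _ hCint ?_)
            intro j' hj'
            obtain ⟨hj'v, hj'ne⟩ := Tri.vars_coeffAt (T i) (lvs i) k hj'
            have hle : j' ≤ lvs i :=
              hlv.2 j' ((Tri.mem_vars_iff_degreeOf_pos (T i) j').mp hj'v)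
            have hlt : (j' : ℕ) < N := by
              have : (j' : ℕ) < (lvs i : ℕ) := lt_of_le_of_ne (by exact_mod_cast hle)
                (fun h => hj'ne (Fin.ext h))
              omega
            exact (hSmem _).mpr (ih j' hlt)
          · show MvPolynomial.aeval xb (Tri.coeffAt (T i) (lvs i) ((T i).degreeOf (lvs i))) ≠ 0
            rw [Tri.coeffAt_degreeOf (T i) (lvs i)]
            exact fun h => hinim i ((hker _).mp h)
        · refine Tri.isIntegral_of_mem_IF F ?_
          have : xb j = w ⟨j, hjr⟩ := rfl
          rw [this]
          exact IntermediateField.subset_adjoin _ _ ⟨⟨j, hjr⟩, rfl⟩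
    exact fun j => main n j j.isLt
  -- the image of P is nonzero and integral over F
  set Pb := MvPolynomial.aeval xb P with hPb
  have hPne : Pb ≠ 0 := fun h => hP𝔭 ((hker P).mp h)
  have hPint : IsIntegral (↥F) Pb :=
    (hSmem _).mp (Tri.aeval_mem_subring _ xb P hCint fun j _ => (hSmem _).mpr (hint j))
  -- minimal polynomial of Pb over F
  set μ := minpoly (↥F) Pb with hμ
  set m := μ.natDegree with hm
  have hrelμ : ∑ k ∈ Finset.range (m + 1), (↑(μ.coeff k) : L) * Pb ^ k = 0 := by
    have h0 := minpoly.aeval (↥F) Pb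
    rw [Polynomial.aeval_eq_sum_range] at h0
    rw [← h0]
    refine Finset.sum_congr rfl fun k _ => ?_
    rw [Algebra.smul_def, IntermediateField.algebraMap_apply]
  have hγ0 : (↑(μ.coeff 0) : L) ≠ 0 := by
    intro h
    exact minpoly.coeff_zero_ne_zero hPint hPne (by exact_mod_cast h)
  -- write the coefficients as fractions of parameter polynomials
  have hγF : ∀ k : ℕ, ∃ rs : MvPolynomial W K × MvPolynomial W K,
      (↑(μ.coeff k) : L) = MvPolynomial.aeval w rs.1 / MvPolynomial.aeval w rs.2 := by
    intro k
    have hmemF : (↑(μ.coeff k) : L) ∈ IntermediateField.adjoin K (Set.range w) := by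
      rw [← hF]; exact (μ.coeff k).2
    obtain ⟨r', s', h⟩ := (IntermediateField.mem_adjoin_range_iff K w _).mp hmemF
    exact ⟨(r', s'), h⟩
  choose rs hrs using hγF
  set r' : ℕ → MvPolynomial W K :=
    fun k => if MvPolynomial.aeval w (rs k).2 = 0 then 0 else (rs k).1 with hr'
  set s' : ℕ → MvPolynomial W K :=
    fun k => if MvPolynomial.aeval w (rs k).2 = 0 then 1 else (rs k).2 with hs'
  have hks : ∀ k : ℕ, (↑(μ.coeff k) : L)
      = MvPolynomial.aeval w (r' k) / MvPolynomial.aeval w (s' k)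
      ∧ MvPolynomial.aeval w (s' k) ≠ 0 := by
    intro k
    by_cases h : MvPolynomial.aeval w (rs k).2 = 0
    · refine ⟨?_, by simp [hs', h]⟩
      rw [hrs k, h, div_zero]
      simp [hr', hs', h]
    · exact ⟨by simp [hr', hs', h, hrs k], by simp [hs', h]⟩
  set sden : L := ∏ k ∈ Finset.range (m + 1), MvPolynomial.aeval w (s' k) with hsdendef
  have hsden : sden ≠ 0 := Finset.prod_ne_zero_iff.mpr fun k _ => (hks k).2
  set b : ℕ → MvPolynomial W K :=
    fun k => r' k * ∏ j ∈ (Finset.range (m + 1)).erase k, s' j with hb'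
  have hb : ∀ k ∈ Finset.range (m + 1),
      MvPolynomial.aeval w (b k) = (↑(μ.coeff k) : L) * sden := by
    intro k hk
    rw [hb']
    simp only
    rw [map_mul, map_prod, (hks k).1, hsdendef, ← Finset.mul_prod_erase _ _ hk]
    have hBk := (hks k).2
    rw [div_mul_eq_mul_div, eq_div_iff hBk]
    ring
  have hrelb : ∑ k ∈ Finset.range (m + 1), MvPolynomial.aeval w (b k) * Pb ^ k = 0 := by
    have heq : ∑ k ∈ Finset.range (m + 1), MvPolynomial.aeval w (b k) * Pb ^ k
        = (∑ k ∈ Finset.range (m + 1), (↑(μ.coeff k) : L) * Pb ^ k) * sden := by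
      rw [Finset.sum_mul]
      exact Finset.sum_congr rfl fun k hk => by rw [hb k hk]; ring
    rw [heq, hrelμ, zero_mul]
  have hb0ne : MvPolynomial.aeval w (b 0) ≠ 0 := by
    rw [hb 0 (Finset.mem_range.mpr (Nat.succ_pos m))]
    exact mul_ne_zero hγ0 hsden
  -- pull everything back to the polynomial ring
  have hψ : ∀ aa : MvPolynomial W K,
      MvPolynomial.aeval xb (MvPolynomial.rename (Subtype.val : W → Fin n) aa)
        = MvPolynomial.aeval w aa := by
    intro aa
    rw [MvPolynomial.aeval_rename]
    rfl
  set g : MvPolynomial (Fin n) K := ∑ k ∈ Finset.range (m + 1),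
    MvPolynomial.rename (Subtype.val : W → Fin n) (b k) * P ^ k with hg
  have hg𝔭 : g ∈ 𝔭 := by
    apply (hker g).mp
    rw [hg, map_sum, show (0 : L) = ∑ k ∈ Finset.range (m + 1),
      MvPolynomial.aeval w (b k) * Pb ^ k from hrelb.symm]
    refine Finset.sum_congr rfl fun k hk => ?_
    rw [map_mul, map_pow, hψ, hPb]
  set c : MvPolynomial (Fin n) K := MvPolynomial.rename (Subtype.val : W → Fin n) (b 0) with hc
  have hcne : c ≠ 0 := fun h => hb0ne (by rw [← hψ (b 0), ← hc, h, map_zero])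
  have hcparams : inParams lvs c := by
    intro j hj
    have hj' := MvPolynomial.vars_rename (Subtype.val : W → Fin n) (b 0) hj
    obtain ⟨u, _, rfl⟩ := Finset.mem_image.mp hj'
    exact u.2
  refine ⟨c, hcne, hcparams, g, hg𝔭,
    -(∑ k ∈ Finset.range m, MvPolynomial.rename (Subtype.val : W → Fin n) (b (k + 1)) * P ^ k),
    ?_⟩
  have hsplit : g = c + P * (∑ k ∈ Finset.range m,
      MvPolynomial.rename (Subtype.val : W → Fin n) (b (k + 1)) * P ^ k) := by
    rw [hg, Finset.sum_range_succ']
    rw [pow_zero, mul_one, ← hc, Finset.mul_sum, add_comm]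
    rw [add_right_inj]
    exact Finset.sum_congr rfl fun k _ => by ring
  rw [hsplit]
  ring
end Aux3


open Tri in
/-- If `T` is a regular triangular set and `P` is not identically zero on any irreducible
component of `Zero(sat(T))`, then the ideal `(P, T_1, …, T_r)` has nonzero intersection
with `K[u]`, where `u` is the parameter set of `T`. -/
theorem exists_nonzero_param_mem_span_of_notIdZero
    {K : Type*} [Field K] [CharZero K] {n r : ℕ}
    (T : Fin r → MvPolynomial (Fin n) K) (lvs : Fin r → Fin n)
    (hT : IsRegular T lvs)
    (P : MvPolynomial (Fin n) K)
    (hP : NotIdZeroOnComponents (satIdeal T lvs) P) :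
    ∃ p ∈ Ideal.span ({P} ∪ Set.range T), p ≠ 0 ∧ inParams lvs p := by
  classical
  set J := satIdeal T lvs with hJ
  have hfin : J.minimalPrimes.Finite := by
    rw [Ideal.minimalPrimes_eq_comap]
    exact (minimalPrimes.finite_of_isNoetherianRing _).image _
  set S := hfin.toFinset with hSdef
  have hdata : ∀ 𝔭 ∈ S, ∃ c : MvPolynomial (Fin n) K, c ≠ 0 ∧ inParams lvs c ∧
      ∃ q ∈ 𝔭, ∃ h, c = q + P * h := by
    intro 𝔭 h𝔭
    have hmem : 𝔭 ∈ J.minimalPrimes := hfin.mem_toFinset.mp h𝔭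
    exact Tri.per_prime T lvs hT P hmem (hP 𝔭 hmem)
  choose cc hc0 hcp qq hq hrepr using hdata
  set c' : MvPolynomial (Fin n) K := ∏ p ∈ S.attach, cc p.1 p.2 with hc'
  set q' : MvPolynomial (Fin n) K := ∏ p ∈ S.attach, qq p.1 p.2 with hq'
  have hc'0 : c' ≠ 0 := Finset.prod_ne_zero_iff.mpr fun p _ => hc0 p.1 p.2
  have hc'p : inParams lvs c' := by
    intro j hj
    obtain ⟨p, _, hjp⟩ := Finset.mem_biUnion.mp (MvPolynomial.vars_prod _ hj)
    exact hcp p.1 p.2 j hjp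
  have hdiff : c' - q' ∈ Ideal.span ({P} : Set (MvPolynomial (Fin n) K)) := by
    rw [← Ideal.Quotient.eq, hc', hq', map_prod, map_prod]
    refine Finset.prod_congr rfl fun p _ => ?_
    rw [Ideal.Quotient.eq]
    obtain ⟨h, hh⟩ := hrepr p.1 p.2
    rw [hh, add_sub_cancel_left]
    exact Ideal.mem_span_singleton'.mpr ⟨h, mul_comm h P⟩
  have hq'rad : q' ∈ J.radical := by
    rw [← Ideal.sInf_minimalPrimes]
    refine Submodule.mem_sInf.mpr fun 𝔭 h𝔭 => ?_
    have hmemS : 𝔭 ∈ S := hfin.mem_toFinset.mpr h𝔭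
    rw [hq', ← Finset.mul_prod_erase S.attach _ (Finset.mem_attach S ⟨𝔭, hmemS⟩)]
    exact Ideal.mul_mem_right _ _ (hq 𝔭 hmemS)
  obtain ⟨m, hm⟩ := Ideal.mem_radical_iff.mp hq'rad
  obtain ⟨d, hd⟩ := hm
  obtain ⟨c, a, hcne, hcp2, hcomb⟩ := Tri.regular_combination T lvs hT
  have hPle : Ideal.span ({P} : Set (MvPolynomial (Fin n) K)) ≤
      Ideal.span ({P} ∪ Set.range T) := Ideal.span_mono Set.subset_union_left
  have hTle : Ideal.span (Set.range T) ≤ Ideal.span ({P} ∪ Set.range T) :=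
    Ideal.span_mono Set.subset_union_right
  refine ⟨c ^ d * c' ^ m, ?_, ?_, ?_⟩
  · rw [← Ideal.Quotient.eq_zero_iff_mem, map_mul, map_pow, map_pow,
      show Ideal.Quotient.mk (Ideal.span ({P} ∪ Set.range T)) c =
        Ideal.Quotient.mk _ (a * initProd T lvs) from Ideal.Quotient.eq.mpr (hTle hcomb),
      show Ideal.Quotient.mk (Ideal.span ({P} ∪ Set.range T)) c' =
        Ideal.Quotient.mk _ q' from Ideal.Quotient.eq.mpr (hPle hdiff),
      ← map_pow, ← map_pow, ← map_mul, Ideal.Quotient.eq_zero_iff_mem,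
      show (a * initProd T lvs) ^ d * q' ^ m = a ^ d * (initProd T lvs ^ d * q' ^ m) by ring]
    exact Ideal.mul_mem_left _ _ (hTle hd)
  · exact mul_ne_zero (pow_ne_zero _ hcne) (pow_ne_zero _ hc'0)
  · intro j hj
    rcases Finset.mem_union.mp (MvPolynomial.vars_mul _ _ hj) with h | h
    · exact hcp2 j (MvPolynomial.vars_pow _ _ h)
    · exact hc'p j (MvPolynomial.vars_pow _ _ h)
end

section
/- A triangular set T={T_1,...,T_r} in K[x_1,...,x_n] is regular if for each 2 ≤ i ≤ r the initial ini(T_i) is not identically zero on any irreducible component of Zero(sat({T_1,...,T_{i-1}})). -/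
open MvPolynomial

namespace Tri

variable {K : Type*} [CommSemiring K] {σ : Type*} [DecidableEq σ]



noncomputable def coeffAt_s2 (f : MvPolynomial σ K) (i : σ) (d : ℕ) : MvPolynomial σ K :=
  ∑ m ∈ f.support.filter (fun m => m i = d),
    MvPolynomial.monomial (Finsupp.erase i m) (MvPolynomial.coeff m f)

theorem sum_coeffAt (f : MvPolynomial σ K) (i : σ) :
    ∑ d ∈ Finset.range (MvPolynomial.degreeOf i f + 1), coeffAt_s2 f i d * X i ^ d = f := by
  conv_rhs => rw [← MvPolynomial.support_sum_monomial_coeff f]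
  rw [← Finset.sum_fiberwise_of_maps_to (g := fun m : σ →₀ ℕ => m i)
    (t := Finset.range (MvPolynomial.degreeOf i f + 1)) (fun m hm => ?_)]
  · refine Finset.sum_congr rfl fun d _ => ?_
    rw [coeffAt_s2, Finset.sum_mul]
    refine Finset.sum_congr rfl fun m hm => ?_
    obtain ⟨hm1, hm2⟩ := Finset.mem_filter.mp hm
    rw [X_pow_eq_monomial, monomial_mul, mul_one, ← hm2]
    rw [Finsupp.erase_add_single i m]
  · rw [Finset.mem_range, Nat.lt_succ_iff, MvPolynomial.degreeOf_eq_sup]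
    exact Finset.le_sup (f := fun m : σ →₀ ℕ => m i) hm

theorem vars_coeffAt_s2 (f : MvPolynomial σ K) (i : σ) (d : ℕ) :
    ∀ w ∈ (coeffAt_s2 f i d).vars, w ∈ f.vars ∧ w ≠ i := by
  intro w hw
  have h := MvPolynomial.vars_sum_subset
    (f.support.filter (fun m => m i = d))
    (fun m => MvPolynomial.monomial (Finsupp.erase i m) (MvPolynomial.coeff m f)) hw
  obtain ⟨m, hm, hw⟩ := Finset.mem_biUnion.mp h
  by_cases hc : MvPolynomial.coeff m f = 0
  · rw [hc, MvPolynomial.monomial_zero] at hw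
    exact absurd hw (by simp)
  rw [MvPolynomial.vars_monomial hc, Finsupp.support_erase] at hw
  have hw' := hw
  have hm' := Finset.mem_filter.mp hm
  refine ⟨?_, (Finset.mem_erase.mp hw').1⟩
  exact (MvPolynomial.mem_vars w).mpr ⟨m, hm'.1, Finset.mem_of_mem_erase hw'⟩

theorem initial_eq_coeffAt (f : MvPolynomial σ K) (i : σ) :
    initial f i = coeffAt_s2 f i (MvPolynomial.degreeOf i f) := rfl


theorem coeff_coeffAt (f : MvPolynomial σ K) (i : σ) (d : ℕ) {m0 : σ →₀ ℕ}
    (hm0 : m0 ∈ f.support) (htop : m0 i = d) :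
    MvPolynomial.coeff (Finsupp.erase i m0) (coeffAt_s2 f i d) = MvPolynomial.coeff m0 f := by
  rw [coeffAt_s2]
  rw [MvPolynomial.coeff_sum]
  rw [Finset.sum_eq_single m0]
  · simp [MvPolynomial.coeff_monomial]
  · intro m hm hne
    rw [MvPolynomial.coeff_monomial, if_neg]
    intro he
    apply hne
    have hm2 := (Finset.mem_filter.mp hm).2
    have : Finsupp.erase i m + Finsupp.single i (m i) =
        Finsupp.erase i m0 + Finsupp.single i (m0 i) := by rw [he, hm2, htop]
    rwa [Finsupp.erase_add_single, Finsupp.erase_add_single] at this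
  · intro hnot
    exact absurd (Finset.mem_filter.mpr ⟨hm0, htop⟩) hnot

theorem initial_ne_zero {f : MvPolynomial σ K} {i : σ}
    (h : 0 < MvPolynomial.degreeOf i f) : initial f i ≠ 0 := by
  have hf : f ≠ 0 := by
    rintro rfl; simp [MvPolynomial.degreeOf_zero] at h
  have hne : f.support.Nonempty := MvPolynomial.support_nonempty.mpr hf
  obtain ⟨m0, hm0, htop⟩ := Finset.exists_mem_eq_sup f.support hne (fun m => m i)
  have : MvPolynomial.coeff (Finsupp.erase i m0) (initial f i) = MvPolynomial.coeff m0 f := by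
    rw [initial_eq_coeffAt]
    exact coeff_coeffAt f i _ hm0 (by rw [MvPolynomial.degreeOf_eq_sup, htop])
  intro h0
  rw [h0, MvPolynomial.coeff_zero] at this
  exact (MvPolynomial.mem_support_iff.mp hm0) this.symm


theorem degreeOf_pos_of_mem_vars {f : MvPolynomial σ K} {v : σ} (h : v ∈ f.vars) :
    0 < MvPolynomial.degreeOf v f := by
  obtain ⟨d, hd, hv⟩ := (MvPolynomial.mem_vars v).mp h
  have hne : d v ≠ 0 := Finsupp.mem_support_iff.mp hv
  calc 0 < d v := Nat.pos_of_ne_zero hne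
    _ ≤ MvPolynomial.degreeOf v f := by
        rw [MvPolynomial.degreeOf_eq_sup]
        exact Finset.le_sup (f := fun m : σ →₀ ℕ => m v) hd

open IntermediateField in
theorem core_aux {K : Type*} [Field K] {n r : ℕ}
    (T : Fin r → MvPolynomial (Fin n) K) (lvs : Fin r → Fin n)
    (hmono : StrictMono lvs) (hlv : ∀ j, IsLeadingVar (T j) (lvs j))
    (q' : Ideal (MvPolynomial (Fin n) K)) (hq' : q'.IsPrime)
    (i : Fin r)
    (hTq : ∀ k : Fin r, k < i → T k ∈ q')
    (hiniq : ∀ k : Fin r, k < i → initial (T k) (lvs k) ∉ q')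
    (L : Type*) [Field L] (ψ : MvPolynomial (Fin n) K →+* L)
    (hψ : ∀ x, ψ x = 0 ↔ x ∈ q') :
    ∀ t : ℕ, t ≤ i.1 → ∀ a : MvPolynomial (Fin n) K,
      (∀ w ∈ a.vars, ∀ j : Fin r, w = lvs j → j.1 < t) → a ∉ q' →
      ∃ g s : MvPolynomial (Fin n) K,
        (∀ w ∈ g.vars, ∀ j : Fin r, w = lvs j → j.1 < t) ∧
        (∀ w ∈ s.vars, ∀ j : Fin r, w ≠ lvs j) ∧ s ∉ q' ∧ a * g - s ∈ q' := by
  haveI := hq'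
  have h1q : (1 : MvPolynomial (Fin n) K) ∉ q' := (Ideal.ne_top_iff_one q').mp hq'.ne_top
  have hvars1 : (1 : MvPolynomial (Fin n) K).vars = ∅ := by
    rw [show (1 : MvPolynomial (Fin n) K) = MvPolynomial.C 1 from rfl, MvPolynomial.vars_C]
  intro t
  induction t with
  | zero =>
    intro _ a hva ha
    refine ⟨1, a, ?_, ?_, ha, by ring_nf; exact q'.zero_mem⟩
    · intro w hw; rw [hvars1] at hw; exact absurd hw (Finset.notMem_empty w)
    · intro w hw j hj
      exact absurd (hva w hw j hj) (Nat.not_lt_zero _)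
  | succ t IH =>
    intro ht a hva ha
    have htle : t ≤ i.1 := Nat.le_of_succ_le ht
    have IH' := IH htle
    -- the level-`lev` fraction property
    let Pl : ℕ → L → Prop := fun lev x => ∃ g s : MvPolynomial (Fin n) K,
      (∀ w ∈ g.vars, ∀ j : Fin r, w = lvs j → j.1 < lev) ∧
      (∀ w ∈ s.vars, ∀ j : Fin r, w ≠ lvs j) ∧ s ∉ q' ∧ x * ψ s = ψ g
    have hP0 : ∀ lev, Pl lev 0 := fun lev =>
      ⟨0, 1, by simp, by rw [hvars1]; intro w hw; exact absurd hw (Finset.notMem_empty w),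
        h1q, by rw [zero_mul, map_zero]⟩
    have hP1 : ∀ lev, Pl lev 1 := fun lev =>
      ⟨1, 1, by rw [hvars1]; intro w hw; exact absurd hw (Finset.notMem_empty w),
        by rw [hvars1]; intro w hw; exact absurd hw (Finset.notMem_empty w), h1q, by rw [one_mul]⟩
    have hPadd : ∀ lev (x y : L), Pl lev x → Pl lev y → Pl lev (x + y) := by
      rintro lev x y ⟨g1, s1, hg1, hs1, hs1q, he1⟩ ⟨g2, s2, hg2, hs2, hs2q, he2⟩
      refine ⟨g1 * s2 + g2 * s1, s1 * s2, ?_, ?_, ?_, ?_⟩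
      · intro w hw j hwj
        rcases Finset.mem_union.mp (MvPolynomial.vars_add_subset _ _ hw) with h | h
        · rcases Finset.mem_union.mp (MvPolynomial.vars_mul _ _ h) with h' | h'
          · exact hg1 w h' j hwj
          · exact absurd hwj (hs2 w h' j)
        · rcases Finset.mem_union.mp (MvPolynomial.vars_mul _ _ h) with h' | h'
          · exact hg2 w h' j hwj
          · exact absurd hwj (hs1 w h' j)
      · intro w hw j
        rcases Finset.mem_union.mp (MvPolynomial.vars_mul _ _ hw) with h | h
        · exact hs1 w h j
        · exact hs2 w h j
      · intro hmem; rcases hq'.mem_or_mem hmem with h | h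
        · exact hs1q h
        · exact hs2q h
      · have heq : (x + y) * ψ (s1 * s2) = (x * ψ s1) * ψ s2 + (y * ψ s2) * ψ s1 := by
          rw [map_mul]; ring
        rw [heq, he1, he2, map_add, map_mul, map_mul]
    have hPmul : ∀ lev (x y : L), Pl lev x → Pl lev y → Pl lev (x * y) := by
      rintro lev x y ⟨g1, s1, hg1, hs1, hs1q, he1⟩ ⟨g2, s2, hg2, hs2, hs2q, he2⟩
      refine ⟨g1 * g2, s1 * s2, ?_, ?_, ?_, ?_⟩
      · intro w hw j hwj
        rcases Finset.mem_union.mp (MvPolynomial.vars_mul _ _ hw) with h | h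
        · exact hg1 w h j hwj
        · exact hg2 w h j hwj
      · intro w hw j
        rcases Finset.mem_union.mp (MvPolynomial.vars_mul _ _ hw) with h | h
        · exact hs1 w h j
        · exact hs2 w h j
      · intro hmem; rcases hq'.mem_or_mem hmem with h | h
        · exact hs1q h
        · exact hs2q h
      · have heq : (x * y) * ψ (s1 * s2) = (x * ψ s1) * (y * ψ s2) := by
          rw [map_mul]; ring
        rw [heq, he1, he2, map_mul]
    have hPneg : ∀ lev (x : L), Pl lev x → Pl lev (-x) := by
      rintro lev x ⟨g1, s1, hg1, hs1, hs1q, he1⟩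
      refine ⟨-g1, s1, ?_, hs1, hs1q, by rw [neg_mul, he1, map_neg]⟩
      intro w hw
      rw [MvPolynomial.vars_neg] at hw
      exact hg1 w hw
    have hPinv : ∀ (x : L), Pl t x → Pl t x⁻¹ := by
      rintro x ⟨g1, s1, hg1, hs1, hs1q, he1⟩
      by_cases hx : x = 0
      · rw [hx, inv_zero]; exact hP0 t
      have hsψ : ψ s1 ≠ 0 := fun h => hs1q ((hψ s1).mp h)
      have hgψ : ψ g1 ≠ 0 := by rw [← he1]; exact mul_ne_zero hx hsψ
      have hg1q : g1 ∉ q' := fun h => hgψ ((hψ g1).mpr h)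
      obtain ⟨g', s', hg', hs', hs'q, hmem⟩ := IH' g1 hg1 hg1q
      have hψmem : ψ (g1 * g' - s') = 0 := (hψ _).mpr hmem
      rw [map_sub, map_mul, sub_eq_zero] at hψmem
      refine ⟨s1 * g', s', ?_, hs', hs'q, ?_⟩
      · intro w hw j hwj
        rcases Finset.mem_union.mp (MvPolynomial.vars_mul _ _ hw) with h | h
        · exact absurd hwj (hs1 w h j)
        · exact hg' w h j hwj
      · rw [← hψmem, map_mul, ← he1]
        field_simp
    -- the subfield of level-t fractions
    let Fk : Subfield L :=
      { carrier := {x | Pl t x}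
        zero_mem' := hP0 t
        one_mem' := hP1 t
        add_mem' := fun hx hy => hPadd t _ _ hx hy
        neg_mem' := fun hx => hPneg t _ hx
        mul_mem' := fun hx hy => hPmul t _ _ hx hy
        inv_mem' := fun x hx => hPinv x hx }
    have hks : t < r := Nat.lt_of_lt_of_le (Nat.lt_succ_self t) (le_trans ht (le_of_lt i.isLt))
    set k : Fin r := ⟨t, hks⟩ with hk
    have hki : k < i := by rw [Fin.lt_def]; exact Nat.lt_of_succ_le ht
    set y : L := ψ (MvPolynomial.X (lvs k)) with hy
    set dd : ℕ := MvPolynomial.degreeOf (lvs k) (T k) with hdd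
    have hddpos : 0 < dd := (hlv k).1
    set cT : ℕ → MvPolynomial (Fin n) K := fun jj => coeffAt_s2 (T k) (lvs k) jj with hcT
    have hvac : ∀ w ∈ (1 : MvPolynomial (Fin n) K).vars, ∀ j : Fin r, w ≠ lvs j := by
      rw [hvars1]; intro w hw; exact absurd hw (Finset.notMem_empty w)
    have hcTvars : ∀ jj : ℕ, ∀ w ∈ (cT jj).vars, ∀ j : Fin r, w = lvs j → j.1 < t := by
      intro jj w hw j hwj
      obtain ⟨hw1, hw2⟩ := vars_coeffAt_s2 (T k) (lvs k) jj w hw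
      have hdeg := degreeOf_pos_of_mem_vars hw1
      have hle : w ≤ lvs k := (hlv k).2 w hdeg
      have hjk : j ≤ k := by
        rw [hwj] at hle
        exact (hmono.le_iff_le).mp hle
      have hne : j ≠ k := by
        intro h; rw [h] at hwj; exact hw2 hwj
      exact lt_of_le_of_ne (Fin.le_def.mp hjk) (fun h => hne (Fin.ext h))
    have hcmem : ∀ jj : ℕ, Pl t (ψ (cT jj)) := fun jj =>
      ⟨cT jj, 1, hcTvars jj, hvac, h1q, by rw [map_one, mul_one]⟩
    have hinikq : initial (T k) (lvs k) ∉ q' := hiniq k hki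
    have hini_eq : cT dd = initial (T k) (lvs k) := (initial_eq_coeffAt (T k) (lvs k)).symm
    have huψ : ψ (cT dd) ≠ 0 := by rw [hini_eq]; exact fun h => hinikq ((hψ _).mp h)
    set u : Fk := ⟨ψ (cT dd), hcmem dd⟩ with hu
    have huL : (u : L) ≠ 0 := huψ
    set c : ℕ → Fk := fun jj => ⟨ψ (cT jj), hcmem jj⟩ with hc
    set p : Polynomial Fk :=
      Polynomial.X ^ dd + ∑ jj ∈ Finset.range dd, Polynomial.C (u⁻¹ * c jj) * Polynomial.X ^ jj
      with hp
    have hpm : p.Monic := by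
      apply Polynomial.monic_X_pow_add
      refine lt_of_le_of_lt (Polynomial.degree_sum_le _ _) ?_
      rw [Finset.sup_lt_iff (by exact_mod_cast WithBot.bot_lt_coe dd)]
      intro jj hjj
      refine lt_of_le_of_lt (Polynomial.degree_C_mul_X_pow_le _ _) ?_
      exact_mod_cast Finset.mem_range.mp hjj
    have hTsum : ∑ jj ∈ Finset.range (dd + 1), ψ (cT jj) * y ^ jj = 0 := by
      have h0 : ψ (T k) = 0 := (hψ _).mpr (hTq k hki)
      have hds := congrArg ψ (sum_coeffAt (T k) (lvs k))
      rw [map_sum] at hds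
      simp only [map_mul, map_pow] at hds
      rw [← h0, ← hds]
    have heval : Polynomial.eval₂ (algebraMap Fk L) y p = 0 := by
      have hexp : Polynomial.eval₂ (algebraMap Fk L) y p
          = y ^ dd + ∑ jj ∈ Finset.range dd, ((u⁻¹ * c jj : Fk) : L) * y ^ jj := by
        rw [hp, Polynomial.eval₂_add, Polynomial.eval₂_X_pow, Polynomial.eval₂_finset_sum]
        congr 1
        refine Finset.sum_congr rfl fun jj _ => ?_
        rw [Polynomial.eval₂_mul, Polynomial.eval₂_C, Polynomial.eval₂_X_pow]
        rfl
      have hmul : (u : L) * Polynomial.eval₂ (algebraMap Fk L) y p = 0 := by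
        rw [hexp, mul_add, Finset.mul_sum]
        have hterm : ∀ jj ∈ Finset.range dd,
            (u : L) * (((u⁻¹ * c jj : Fk) : L) * y ^ jj) = ψ (cT jj) * y ^ jj := by
          intro jj _
          have hcast : ((u⁻¹ * c jj : Fk) : L) = ((u : L))⁻¹ * ψ (cT jj) := by
            push_cast
            rfl
          rw [hcast, ← mul_assoc, ← mul_assoc, mul_inv_cancel₀ huL, one_mul]
        rw [Finset.sum_congr rfl hterm]
        have hlast : (u : L) * y ^ dd = ψ (cT dd) * y ^ dd := rfl
        rw [hlast]
        calc ψ (cT dd) * y ^ dd + ∑ jj ∈ Finset.range dd, ψ (cT jj) * y ^ jj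
            = ∑ jj ∈ Finset.range (dd + 1), ψ (cT jj) * y ^ jj := by
              rw [Finset.sum_range_succ]; ring
          _ = 0 := hTsum
      exact (mul_eq_zero.mp hmul).resolve_left huL
    have hInt : IsIntegral Fk y := ⟨p, hpm, heval⟩
    have hsub := IntermediateField.adjoin_simple_toSubalgebra_of_isAlgebraic hInt.isAlgebraic
    have hca : ∀ jj : ℕ, Pl t (ψ (coeffAt_s2 a (lvs k) jj)) := by
      intro jj
      refine ⟨coeffAt_s2 a (lvs k) jj, 1, ?_, hvac, h1q, by rw [map_one, mul_one]⟩
      intro w hw j hwj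
      obtain ⟨hw1, hw2⟩ := vars_coeffAt_s2 a (lvs k) jj w hw
      have h1 : j.1 < t + 1 := hva w hw1 j hwj
      have hne : j ≠ k := by intro h; rw [h] at hwj; exact hw2 hwj
      have hne' : j.1 ≠ t := fun h => hne (Fin.ext h)
      omega
    have hmemA : ψ a ∈ Algebra.adjoin Fk {y} := by
      have hds := congrArg ψ (sum_coeffAt a (lvs k))
      rw [map_sum] at hds
      simp only [map_mul, map_pow] at hds
      rw [← hds]
      refine Subalgebra.sum_mem _ fun jj _ => Subalgebra.mul_mem _ ?_
        (Subalgebra.pow_mem _ (Algebra.subset_adjoin (Set.mem_singleton y)) _)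
      exact Subalgebra.algebraMap_mem (Algebra.adjoin Fk {y})
        (⟨ψ (coeffAt_s2 a (lvs k) jj), hca jj⟩ : Fk)
    have hψa : ψ a ≠ 0 := fun h => ha ((hψ a).mp h)
    have hmemI : ψ a ∈ IntermediateField.adjoin Fk {y} := by
      rw [← IntermediateField.mem_toSubalgebra, hsub]; exact hmemA
    set xx : IntermediateField.adjoin Fk {y} := ⟨ψ a, hmemI⟩ with hxxdef
    have hxx0 : xx ≠ 0 := by
      intro h; exact hψa (congrArg Subtype.val h)
    have hzadj : ((xx⁻¹ : IntermediateField.adjoin Fk {y}) : L) ∈ Algebra.adjoin Fk {y} := by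
      rw [← hsub]; exact (xx⁻¹).2
    have hz : ψ a * ((xx⁻¹ : IntermediateField.adjoin Fk {y}) : L) = 1 := by
      have h := congrArg (fun w : IntermediateField.adjoin Fk {y} => (w : L))
        (mul_inv_cancel₀ hxx0)
      simpa using h
    have hrep : ∀ z, z ∈ Algebra.adjoin Fk {y} → Pl (t+1) z := by
      intro z hzmem
      induction hzmem using Algebra.adjoin_induction with
      | mem w hw =>
        rcases hw with rfl
        refine ⟨MvPolynomial.X (lvs k), 1, ?_, hvac, h1q, by rw [map_one, mul_one]⟩
        intro w hw j hwj
        rw [MvPolynomial.vars_X, Finset.mem_singleton] at hw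
        have : j = k := hmono.injective (by rw [← hwj, hw])
        rw [this]
        exact Nat.lt_succ_self t
      | algebraMap rr =>
        obtain ⟨g, s, hg, hs, hsq, he⟩ := rr.2
        exact ⟨g, s, fun w hw j hwj => Nat.lt_succ_of_lt (hg w hw j hwj), hs, hsq, he⟩
      | add x y hx hy hPx hPy => exact hPadd _ _ _ hPx hPy
      | mul x y hx hy hPx hPy => exact hPmul _ _ _ hPx hPy
    obtain ⟨G, s', hG, hs', hs'q, heq⟩ := hrep _ hzadj
    refine ⟨G, s', hG, hs', hs'q, ?_⟩
    apply (hψ _).mp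
    have hfin : ψ a * ψ G = ψ s' := by
      rw [← heq]
      calc ψ a * (((xx⁻¹ : IntermediateField.adjoin Fk {y}) : L) * ψ s')
          = (ψ a * ((xx⁻¹ : IntermediateField.adjoin Fk {y}) : L)) * ψ s' := by ring
        _ = ψ s' := by rw [hz, one_mul]
    rw [map_sub, map_mul, hfin, sub_self]



theorem vars_initial_lt {K : Type*} [CommSemiring K] {n r : ℕ}
    (T : Fin r → MvPolynomial (Fin n) K) (lvs : Fin r → Fin n)
    (hmono : StrictMono lvs) (hlv : ∀ j, IsLeadingVar (T j) (lvs j)) (i : Fin r) :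
    ∀ w ∈ (initial (T i) (lvs i)).vars, ∀ j : Fin r, w = lvs j → j.1 < i.1 := by
  intro w hw j hwj
  rw [initial_eq_coeffAt] at hw
  obtain ⟨hw1, hw2⟩ := vars_coeffAt_s2 (T i) (lvs i) _ w hw
  have hdeg := degreeOf_pos_of_mem_vars hw1
  have hle : w ≤ lvs i := (hlv i).2 w hdeg
  have hji : j ≤ i := by
    rw [hwj] at hle
    exact (hmono.le_iff_le).mp hle
  have hne : j ≠ i := by
    intro h; rw [h] at hwj; exact hw2 hwj
  exact lt_of_le_of_ne (Fin.le_def.mp hji) (fun h => hne (Fin.ext h))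

theorem key_mem {K : Type*} [Field K] {n r : ℕ}
    (T : Fin r → MvPolynomial (Fin n) K) (lvs : Fin r → Fin n)
    (hmono : StrictMono lvs) (hlv : ∀ j, IsLeadingVar (T j) (lvs j))
    (i : Fin r) (q q' : Ideal (MvPolynomial (Fin n) K)) (hq' : q'.IsPrime)
    (hle : q' ≤ q)
    (hTq' : ∀ k : Fin r, k < i → T k ∈ q')
    (hiniq : ∀ k : Fin r, k < i → initial (T k) (lvs k) ∉ q)
    (hqS : ∀ s : MvPolynomial (Fin n) K, s ∈ q → s ≠ 0 → ¬ inParams lvs s)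
    (f : MvPolynomial (Fin n) K) (hf : f ∈ q)
    (hfv : ∀ w ∈ f.vars, ∀ j : Fin r, w = lvs j → j.1 < i.1) :
    f ∈ q' := by
  haveI := hq'
  by_contra hfq'
  set D := MvPolynomial (Fin n) K ⧸ q' with hD
  let L := FractionRing D
  let ψ : MvPolynomial (Fin n) K →+* L := (algebraMap D L).comp (Ideal.Quotient.mk q')
  have hψ : ∀ x, ψ x = 0 ↔ x ∈ q' := fun x => by
    rw [show ψ x = algebraMap D L (Ideal.Quotient.mk q' x) from rfl,
      map_eq_zero_iff _ (IsFractionRing.injective D L), Ideal.Quotient.eq_zero_iff_mem]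
  obtain ⟨g, s, hg, hs, hsq', hmem⟩ := core_aux T lvs hmono hlv q' hq' i hTq'
    (fun k hk h => hiniq k hk (hle h)) L ψ hψ i.1 le_rfl f hfv hfq'
  have hsq : s ∈ q := by
    have h1 : f * g - s ∈ q := hle hmem
    have h2 : f * g ∈ q := Ideal.mul_mem_right _ _ hf
    have h3 := Ideal.sub_mem q h2 h1
    simpa using h3
  have hs0 : s ≠ 0 := fun h => hsq' (h ▸ q'.zero_mem)
  refine hqS s hsq hs0 ?_
  intro w hw
  rintro ⟨j, rfl⟩
  exact hs _ hw j rfl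


end Tri

open Tri in
/-- A triangular set `T = {T_1, …, T_r}` is regular if for each `2 ≤ i ≤ r` the initial
`ini(T_i)` is not identically zero on any irreducible component of
`Zero(sat({T_1, …, T_{i-1}}))`. -/
theorem isRegular_of_initial_notIdZero
    {K : Type*} [Field K] [CharZero K] {n r : ℕ}
    (T : Fin r → MvPolynomial (Fin n) K) (lvs : Fin r → Fin n)
    (hT : IsTriangular T lvs)
    (h : ∀ i : Fin r, 0 < (i : ℕ) →
      NotIdZeroOnComponents
        (satIdeal (fun j : Fin (i : ℕ) => T ⟨j.1, j.isLt.trans i.isLt⟩)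
          (fun j : Fin (i : ℕ) => lvs ⟨j.1, j.isLt.trans i.isLt⟩))
        (initial (T i) (lvs i))) :
    IsRegular T lvs := by
  obtain ⟨hmono, hlv⟩ := hT
  refine ⟨⟨hmono, hlv⟩, ?_⟩
  suffices H : ∀ m : ℕ, ∀ i : Fin r, i.1 ≤ m →
      ∃ p ∈ Ideal.span (T '' {j | j < i} ∪ {initial (T i) (lvs i)}),
        p ≠ 0 ∧ inParams lvs p by
    exact fun i => H i.1 i le_rfl
  have hbase : ∀ i : Fin r, i.1 = 0 →
      ∃ p ∈ Ideal.span (T '' {j | j < i} ∪ {initial (T i) (lvs i)}),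
        p ≠ 0 ∧ inParams lvs p := by
    intro i hi0
    refine ⟨initial (T i) (lvs i), Ideal.subset_span (Or.inr rfl),
      initial_ne_zero (hlv i).1, ?_⟩
    intro w hw
    rintro ⟨j, rfl⟩
    have := vars_initial_lt T lvs hmono hlv i _ hw j rfl
    omega
  intro m
  induction m with
  | zero =>
    intro i hi
    exact hbase i (Nat.le_zero.mp hi)
  | succ m IHm =>
    intro i him
    by_cases hc : i.1 ≤ m
    · exact IHm i hc
    have hipos : 0 < i.1 := by omega
    by_contra hnone
    push_neg at hnone
    -- the multiplicative set of nonzero parameter polynomials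
    let Sm : Submonoid (MvPolynomial (Fin n) K) :=
      { carrier := {s | s ≠ 0 ∧ inParams lvs s}
        one_mem' := ⟨one_ne_zero, by
          intro w hw
          rw [show (1 : MvPolynomial (Fin n) K) = MvPolynomial.C 1 from rfl,
            MvPolynomial.vars_C] at hw
          exact absurd hw (Finset.notMem_empty w)⟩
        mul_mem' := by
          rintro x y ⟨hx0, hxp⟩ ⟨hy0, hyp⟩
          refine ⟨mul_ne_zero hx0 hy0, ?_⟩
          intro w hw
          rcases Finset.mem_union.mp (MvPolynomial.vars_mul _ _ hw) with hww | hww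
          · exact hxp w hww
          · exact hyp w hww }
    set A : Ideal (MvPolynomial (Fin n) K) :=
      Ideal.span (T '' {j | j < i} ∪ {initial (T i) (lvs i)}) with hA
    have hdisj : Disjoint (A : Set (MvPolynomial (Fin n) K)) Sm := by
      rw [Set.disjoint_left]
      rintro p hp ⟨hp0, hpp⟩
      exact hnone p hp hp0 hpp
    obtain ⟨q, hqprime, hAq, hqdisj⟩ := Ideal.exists_le_prime_disjoint A Sm hdisj
    haveI := hqprime
    have hTq : ∀ k : Fin r, k < i → T k ∈ q := fun k hk =>
      hAq (Ideal.subset_span (Or.inl ⟨k, hk, rfl⟩))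
    have hPq : initial (T i) (lvs i) ∈ q := hAq (Ideal.subset_span (Or.inr rfl))
    have hqS : ∀ s ∈ q, s ≠ 0 → ¬ inParams lvs s := fun s hsq hs0 hsp =>
      (Set.disjoint_left.mp hqdisj) hsq ⟨hs0, hsp⟩
    by_cases hini : ∃ k : Fin r, k < i ∧ initial (T k) (lvs k) ∈ q
    · obtain ⟨k, hk, hkini⟩ := hini
      have hklt : k.1 ≤ m := by
        have := Fin.lt_def.mp hk
        omega
      obtain ⟨p, hpmem, hp0, hpp⟩ := IHm k hklt
      have hsub : Ideal.span (T '' {j | j < k} ∪ {initial (T k) (lvs k)}) ≤ q := by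
        rw [Ideal.span_le]
        rintro x (⟨j, hj, rfl⟩ | rfl)
        · exact hTq j (lt_trans hj hk)
        · exact hkini
      exact hqS p (hsub hpmem) hp0 hpp
    · push_neg at hini
      have hiniq : ∀ k : Fin r, k < i → initial (T k) (lvs k) ∉ q := hini
      -- q contains the saturated ideal of the truncated system
      have hsat : satIdeal (fun j : Fin (i : ℕ) => T ⟨j.1, j.isLt.trans i.isLt⟩)
          (fun j : Fin (i : ℕ) => lvs ⟨j.1, j.isLt.trans i.isLt⟩) ≤ q := by
        rintro f ⟨d, hd⟩
        have hspan : Ideal.span (Set.range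
            (fun j : Fin (i : ℕ) => T ⟨j.1, j.isLt.trans i.isLt⟩)) ≤ q := by
          rw [Ideal.span_le]
          rintro x ⟨j, rfl⟩
          exact hTq ⟨j.1, j.isLt.trans i.isLt⟩ (Fin.lt_def.mpr j.isLt)
        have hprodq : initProd (fun j : Fin (i : ℕ) => T ⟨j.1, j.isLt.trans i.isLt⟩)
            (fun j : Fin (i : ℕ) => lvs ⟨j.1, j.isLt.trans i.isLt⟩) ∉ q := by
          intro hmem
          rw [initProd] at hmem
          obtain ⟨j, _, hjmem⟩ := (Ideal.IsPrime.prod_mem_iff).mp hmem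
          exact hiniq ⟨j.1, j.isLt.trans i.isLt⟩ (Fin.lt_def.mpr j.isLt) hjmem
        have hin : _ ∈ q := hspan hd
        rcases hqprime.mem_or_mem hin with hmem | hmem
        · exact absurd (hqprime.mem_of_pow_mem _ hmem) hprodq
        · exact hmem
      obtain ⟨q', hq'min, hq'le⟩ := Ideal.exists_minimalPrimes_le hsat
      have hq'prime : q'.IsPrime := hq'min.1.1
      have hsatle : satIdeal (fun j : Fin (i : ℕ) => T ⟨j.1, j.isLt.trans i.isLt⟩)
          (fun j : Fin (i : ℕ) => lvs ⟨j.1, j.isLt.trans i.isLt⟩) ≤ q' := hq'min.1.2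
      have hTq' : ∀ k : Fin r, k < i → T k ∈ q' := by
        intro k hk
        apply hsatle
        refine ⟨0, ?_⟩
        rw [pow_zero, one_mul]
        apply Ideal.subset_span
        exact ⟨⟨k.1, Fin.lt_def.mp hk⟩, congrArg T (Fin.eta k _)⟩
      have hkey : initial (T i) (lvs i) ∈ q' :=
        key_mem T lvs hmono hlv i q q' hq'prime hq'le hTq' hiniq hqS
          (initial (T i) (lvs i)) hPq (vars_initial_lt T lvs hmono hlv i)
      exact h i hipos q' hq'min hkey
end

section
/- Let T={T_1,...,T_r} be a regular triangular set in K[x_1,...,x_n]. If M ∈ K[x_1,...,x_n] is not identically zero on any irreducible component of Zero(sat(T)), then Zero(sat(T)) equals the Zariski closure of Zero(T/I_T), which equals the Zariski closure of Zero(T/M·I_T). -/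
open MvPolynomial

section Aux

open MvPolynomial

variable {K : Type*} [Field K] {E : Type*} [Field E] [Algebra K E] {n : ℕ}

/-- Apply a `K`-linear retraction `π : E → K` coefficientwise to a polynomial over `E`. -/
noncomputable def piPoly (π : E →ₗ[K] K) (g : MvPolynomial (Fin n) E) :
    MvPolynomial (Fin n) K :=
  ∑ m ∈ g.support, MvPolynomial.monomial m (π (MvPolynomial.coeff m g))

lemma coeff_piPoly (π : E →ₗ[K] K) (g : MvPolynomial (Fin n) E) (m : Fin n →₀ ℕ) :
    MvPolynomial.coeff m (piPoly π g) = π (MvPolynomial.coeff m g) := by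
  rw [piPoly, MvPolynomial.coeff_sum]
  simp only [MvPolynomial.coeff_monomial]
  rw [Finset.sum_ite_eq' g.support m (fun m' => π (MvPolynomial.coeff m' g))]
  split_ifs with hm
  · rfl
  · rw [MvPolynomial.notMem_support_iff.mp hm, map_zero]

lemma piPoly_mul_map (π : E →ₗ[K] K) (c : MvPolynomial (Fin n) E)
    (g : MvPolynomial (Fin n) K) :
    piPoly π (c * MvPolynomial.map (algebraMap K E) g) = piPoly π c * g := by
  ext m
  rw [coeff_piPoly, MvPolynomial.coeff_mul, MvPolynomial.coeff_mul, map_sum]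
  refine Finset.sum_congr rfl fun x _ => ?_
  rw [MvPolynomial.coeff_map, coeff_piPoly]
  have h1 : MvPolynomial.coeff x.1 c * algebraMap K E (MvPolynomial.coeff x.2 g)
      = (MvPolynomial.coeff x.2 g) • (MvPolynomial.coeff x.1 c) := by
    rw [Algebra.smul_def, mul_comm]
  rw [h1, map_smul, smul_eq_mul, mul_comm]

lemma piPoly_map (π : E →ₗ[K] K) (hπ : ∀ a : K, π (algebraMap K E a) = a)
    (f : MvPolynomial (Fin n) K) :
    piPoly π (MvPolynomial.map (algebraMap K E) f) = f := by
  ext m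
  rw [coeff_piPoly, MvPolynomial.coeff_map, hπ]

lemma piPoly_zero (π : E →ₗ[K] K) : piPoly π (0 : MvPolynomial (Fin n) E) = 0 := by
  ext m; rw [coeff_piPoly]; simp

lemma piPoly_add (π : E →ₗ[K] K) (a b : MvPolynomial (Fin n) E) :
    piPoly π (a + b) = piPoly π a + piPoly π b := by
  ext m
  rw [MvPolynomial.coeff_add, coeff_piPoly, coeff_piPoly, coeff_piPoly,
    MvPolynomial.coeff_add, map_add]

/-- Descent: if `map φ f` lies in the extension of `J` to `E[x]`, then `f ∈ J`. -/
lemma mem_of_map_mem (π : E →ₗ[K] K) (hπ : ∀ a : K, π (algebraMap K E a) = a)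
    (J : Ideal (MvPolynomial (Fin n) K)) (f : MvPolynomial (Fin n) K)
    (hf : MvPolynomial.map (algebraMap K E) f ∈
      J.map (MvPolynomial.map (algebraMap K E) : MvPolynomial (Fin n) K →+* MvPolynomial (Fin n) E)) :
    f ∈ J := by
  have key : ∀ g ∈ J.map
      (MvPolynomial.map (algebraMap K E) : MvPolynomial (Fin n) K →+* MvPolynomial (Fin n) E),
      ∀ c : MvPolynomial (Fin n) E, piPoly π (c * g) ∈ J := by
    intro g hg
    rw [Ideal.map] at hg
    refine Submodule.span_induction ?_ ?_ ?_ ?_ hg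
    · rintro _ ⟨f', hf', rfl⟩ c
      rw [piPoly_mul_map]
      exact Ideal.mul_mem_left _ _ hf'
    · intro c
      rw [mul_zero, piPoly_zero]
      exact J.zero_mem
    · intro a b _ _ ha hb c
      rw [mul_add, piPoly_add]
      exact J.add_mem (ha c) (hb c)
    · intro a b _ hb c
      rw [smul_eq_mul, ← mul_assoc]
      exact hb (c * a)
  have := key _ hf 1
  rwa [one_mul, piPoly_map π hπ] at this

/-- A version of the Nullstellensatz over the base field `K`, with zeros taken in an
algebraically closed extension `E`. -/
lemma mem_radical_of_vanishing [IsAlgClosed E] (π : E →ₗ[K] K)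
    (hπ : ∀ a : K, π (algebraMap K E a) = a)
    (J : Ideal (MvPolynomial (Fin n) K)) (f : MvPolynomial (Fin n) K)
    (hf : ∀ x : Fin n → E, (∀ g ∈ J, MvPolynomial.aeval x g = 0) →
      MvPolynomial.aeval x f = 0) :
    f ∈ J.radical := by
  set φ : MvPolynomial (Fin n) K →+* MvPolynomial (Fin n) E :=
    (MvPolynomial.map (algebraMap K E)) with hφ
  set J' := J.map φ with hJ'
  have haev : ∀ (x : Fin n → E) (g : MvPolynomial (Fin n) K),
      MvPolynomial.eval x (φ g) = MvPolynomial.aeval x g := by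
    intro x g
    rw [hφ, MvPolynomial.eval_map, MvPolynomial.aeval_def]
  have hmem : φ f ∈ MvPolynomial.vanishingIdeal E (MvPolynomial.zeroLocus E J') := by
    intro x hx
    change MvPolynomial.eval x (φ f) = 0
    rw [haev]
    refine hf x fun g hg => ?_
    rw [← haev]
    exact hx (φ g) (Ideal.mem_map_of_mem φ hg)
  rw [MvPolynomial.vanishingIdeal_zeroLocus_eq_radical] at hmem
  obtain ⟨m, hm⟩ := hmem
  rw [← map_pow] at hm
  exact ⟨m, mem_of_map_mem π hπ J (f ^ m) hm⟩

end Aux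

open Tri in
/-- If `T` is a regular triangular set and `M` is not identically zero on any irreducible
component of `Zero(sat(T))`, then `Zero(sat(T))` equals the Zariski closure of
`Zero(T/I_T)`, which equals the Zariski closure of `Zero(T/M·I_T)`. -/
theorem zeroSetI_satIdeal_eq_zClosure
    {K : Type*} [Field K] [CharZero K] (E : Type*) [Field E] [IsAlgClosed E] [Algebra K E]
    {n r : ℕ}
    (T : Fin r → MvPolynomial (Fin n) K) (lvs : Fin r → Fin n)
    (hT : IsRegular T lvs)
    (M : MvPolynomial (Fin n) K)
    (hM : NotIdZeroOnComponents (satIdeal T lvs) M) :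
    zeroSetI E (satIdeal T lvs) = zClosure K (zeroSet E (Set.range T) (initProd T lvs)) ∧
    zClosure K (zeroSet E (Set.range T) (initProd T lvs))
      = zClosure K (zeroSet E (Set.range T) (M * initProd T lvs)) := by
  classical
  obtain ⟨π, hπc⟩ := (Algebra.linearMap K E).exists_leftInverse_of_injective
    (LinearMap.ker_eq_bot.mpr (algebraMap K E).injective)
  have hπ : ∀ a : K, π (algebraMap K E a) = a := fun a => by
    have := LinearMap.congr_fun hπc a
    simpa using this
  set J : Ideal (MvPolynomial (Fin n) K) := Ideal.span (Set.range T) with hJdef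
  set h : MvPolynomial (Fin n) K := initProd T lvs with hhdef
  have hzJ : ∀ x : Fin n → E, (∀ i, MvPolynomial.aeval x (T i) = 0) →
      ∀ g ∈ J, MvPolynomial.aeval x g = 0 := by
    intro x hx g hg
    have hle : J ≤ RingHom.ker (MvPolynomial.aeval (R := K) x) := by
      rw [hJdef, Ideal.span_le]
      rintro _ ⟨i, rfl⟩
      exact hx i
    exact hle hg
  have hsatmem : ∀ f : MvPolynomial (Fin n) K,
      f ∈ satIdeal T lvs ↔ ∃ d : ℕ, h ^ d * f ∈ J := fun f => Iff.rfl
  have part1 : zeroSetI E (satIdeal T lvs)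
      = zClosure K (zeroSet E (Set.range T) h) := by
    apply Set.Subset.antisymm
    · intro x hx f hf
      have hrad : h * f ∈ J.radical := by
        refine mem_radical_of_vanishing π hπ J _ fun y hy => ?_
        by_cases hhy : MvPolynomial.aeval y h = 0
        · rw [map_mul, hhy, zero_mul]
        · have hmem : y ∈ zeroSet E (Set.range T) h := by
            refine ⟨?_, hhy⟩
            rintro _ ⟨i, rfl⟩
            exact hy (T i) (Ideal.subset_span ⟨i, rfl⟩)
          rw [map_mul, hf y hmem, mul_zero]
      obtain ⟨m, hm⟩ := hrad
      have hfm : f ^ m ∈ satIdeal T lvs := by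
        rw [hsatmem]
        exact ⟨m, by rwa [mul_pow] at hm⟩
      have h0 := hx _ hfm
      rw [map_pow] at h0
      rcases eq_or_ne m 0 with hm0 | hm0
      · rw [hm0, pow_zero] at h0
        exact absurd h0 one_ne_zero
      · exact (pow_eq_zero_iff hm0).mp h0
    · intro x hx g hg
      obtain ⟨d, hd⟩ := (hsatmem g).mp hg
      refine hx g fun y hy => ?_
      obtain ⟨hy1, hy2⟩ := hy
      have h0 : MvPolynomial.aeval y (h ^ d * g) = 0 :=
        hzJ y (fun i => hy1 (T i) ⟨i, rfl⟩) _ hd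
      rw [map_mul, map_pow] at h0
      exact (mul_eq_zero.mp h0).resolve_left (pow_ne_zero d hy2)
  refine ⟨part1, ?_⟩
  have sub1 : zeroSet E (Set.range T) (M * h) ⊆ zeroSet E (Set.range T) h := by
    rintro y ⟨h1, h2⟩
    refine ⟨h1, fun h0 => h2 ?_⟩
    rw [map_mul, h0, mul_zero]
  apply Set.Subset.antisymm
  · intro x hx f hf
    have hrad : h * (M * f) ∈ J.radical := by
      refine mem_radical_of_vanishing π hπ J _ fun y hy => ?_
      by_cases hhy : MvPolynomial.aeval y h = 0
      · rw [map_mul, hhy, zero_mul]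
      by_cases hMy : MvPolynomial.aeval y M = 0
      · rw [map_mul, map_mul, hMy, zero_mul, mul_zero]
      · have hmem : y ∈ zeroSet E (Set.range T) (M * h) := by
          refine ⟨?_, ?_⟩
          · rintro _ ⟨i, rfl⟩
            exact hy (T i) (Ideal.subset_span ⟨i, rfl⟩)
          · rw [map_mul]
            exact mul_ne_zero hMy hhy
        rw [map_mul, map_mul, hf y hmem, mul_zero, mul_zero]
    obtain ⟨m, hm⟩ := hrad
    have hMf : M * f ∈ (satIdeal T lvs).radical := by
      refine ⟨m, ?_⟩
      rw [hsatmem]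
      exact ⟨m, by rwa [mul_pow] at hm⟩
    have hfrad : f ∈ (satIdeal T lvs).radical := by
      rw [← Ideal.sInf_minimalPrimes] at hMf ⊢
      rw [Submodule.mem_sInf] at hMf ⊢
      intro p hp
      have hp' : Minimal (fun q => q.IsPrime ∧ satIdeal T lvs ≤ q) p := hp
      have hpp : Ideal.IsPrime p := hp'.prop.1
      exact (hpp.mem_or_mem (hMf p hp)).resolve_left (hM p hp)
    obtain ⟨m', hm'⟩ := hfrad
    have hx' : x ∈ zeroSetI E (satIdeal T lvs) := by
      rw [part1]; exact hx
    have h0 := hx' _ hm'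
    rw [map_pow] at h0
    rcases eq_or_ne m' 0 with hm0 | hm0
    · rw [hm0, pow_zero] at h0
      exact absurd h0 one_ne_zero
    · exact (pow_eq_zero_iff hm0).mp h0
  · intro x hx f hf
    exact hx f fun y hy => hf y (sub1 hy)
end
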